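/- Let U ⊆ ℝ³ be a nonempty open set, let a = (a₁, a₂, a₃) : U → ℝ³ be twice continuously differentiable and b = (b₁, b₂, b₃) : U → ℝ³ be continuously differentiable, with the scalar product a·b nonvanishing on U. Let c', c'' ∈ ℝ and suppose that on U: curl a = c'·b (i.e. ∂₂a₃ − ∂₃a₂ = c'b₁, ∂₃a₁ − ∂₁a₃ = c'b₂, ∂₁a₂ − ∂₂a₁ = c'b₃) and div b = c''·(a·b) (i.e. ∂₁b₁ + ∂₂b₂ + ∂₃b₃ = c''·(a₁b₁ + a₂b₂ + a₃b₃)). Then c'·c'' = 0. -/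

import Mathlib

/-- Partial derivative in the `i`-th coordinate direction of a function on `ℝⁿ`. -/
noncomputable def pd {n : ℕ} (i : Fin n) (f : (Fin n → ℝ) → ℝ) (x : Fin n → ℝ) : ℝ :=
  fderiv ℝ f x (Pi.single i 1)

section aux

variable {U : Set (Fin 3 → ℝ)} {x : Fin 3 → ℝ}

/-- A `C²` function on an open set has differentiable partial derivatives. -/
lemma pd_diffAt (hU : IsOpen U) {f : (Fin 3 → ℝ) → ℝ} (hf : ContDiffOn ℝ 2 f U)
    (hx : x ∈ U) (j : Fin 3) : DifferentiableAt ℝ (fun y => pd j f y) x := by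
  have hF : ContDiffOn ℝ 1 (fderiv ℝ f) U :=
    hf.fderiv_of_isOpen hU (by norm_num)
  have hFd : DifferentiableAt ℝ (fderiv ℝ f) x :=
    (hF.differentiableOn one_ne_zero).differentiableAt (hU.mem_nhds hx)
  exact ((ContinuousLinearMap.apply ℝ ℝ (Pi.single j 1)).hasFDerivAt.comp x
    hFd.hasFDerivAt).differentiableAt

/-- Clairaut: symmetry of second partial derivatives for `C²` functions. -/
lemma pd_symm (hU : IsOpen U) {f : (Fin 3 → ℝ) → ℝ} (hf : ContDiffOn ℝ 2 f U)
    (hx : x ∈ U) (i j : Fin 3) :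
    pd i (fun y => pd j f y) x = pd j (fun y => pd i f y) x := by
  set F := fderiv ℝ f with hFdef
  have hF : ContDiffOn ℝ 1 F U := hf.fderiv_of_isOpen hU (by norm_num)
  have hFd : DifferentiableAt ℝ F x :=
    (hF.differentiableOn one_ne_zero).differentiableAt (hU.mem_nhds hx)
  set f'' := fderiv ℝ F x with hf''def
  have hnear : ∀ᶠ y in nhds x, HasFDerivAt f (F y) y := by
    filter_upwards [hU.mem_nhds hx] with y hy
    exact ((hf.differentiableOn (by norm_num)).differentiableAt
      (hU.mem_nhds hy)).hasFDerivAt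
  have hsymm : ∀ v w, f'' v w = f'' w v := fun v w =>
    second_derivative_symmetric_of_eventually hnear hFd.hasFDerivAt v w
  have key : ∀ u v : Fin 3 → ℝ,
      fderiv ℝ (fun y => F y v) x u = f'' u v := by
    intro u v
    have : HasFDerivAt (fun y => F y v)
        ((ContinuousLinearMap.apply ℝ ℝ v).comp f'') x :=
      (ContinuousLinearMap.apply ℝ ℝ v).hasFDerivAt.comp x hFd.hasFDerivAt
    rw [this.fderiv]; rfl
  show fderiv ℝ (fun y => F y (Pi.single j 1)) x (Pi.single i 1)
      = fderiv ℝ (fun y => F y (Pi.single i 1)) x (Pi.single j 1)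
  rw [key, key]
  exact hsymm _ _

end aux

/-- On a nonempty open `U ⊆ ℝ³`, if `a` is `C²`, `b` is `C¹`, `a·b` is
nonvanishing, `curl a = c'·b` and `div b = c''·(a·b)` on `U`, then `c'·c'' = 0`
(the Jacobi condition on the two Vessiot structure constants of the contact structure). -/
theorem stmt18 (U : Set (Fin 3 → ℝ)) (hU : IsOpen U) (hne : U.Nonempty)
    (a b : (Fin 3 → ℝ) → (Fin 3 → ℝ))
    (ha : ∀ i, ContDiffOn ℝ 2 (fun x => a x i) U)
    (hb : ∀ i, ContDiffOn ℝ 1 (fun x => b x i) U)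
    (hab : ∀ x ∈ U, (∑ i, a x i * b x i) ≠ 0)
    (c' c'' : ℝ)
    (hcurl : ∀ x ∈ U,
      pd 1 (fun y => a y 2) x - pd 2 (fun y => a y 1) x = c' * b x 0 ∧
      pd 2 (fun y => a y 0) x - pd 0 (fun y => a y 2) x = c' * b x 1 ∧
      pd 0 (fun y => a y 1) x - pd 1 (fun y => a y 0) x = c' * b x 2)
    (hdiv : ∀ x ∈ U,
      (∑ i, pd i (fun y => b y i) x) = c'' * ∑ i, a x i * b x i) :
    c' * c'' = 0 := by
  obtain ⟨x, hx⟩ := hne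
  have hbd : ∀ i j : Fin 3, DifferentiableAt ℝ (fun y => b y j) x := fun _ j =>
    ((hb j).differentiableOn one_ne_zero).differentiableAt (hU.mem_nhds hx)
  have had : ∀ i j : Fin 3, DifferentiableAt ℝ (fun y => pd j (fun z => a z i) y) x :=
    fun i j => pd_diffAt hU (ha i) hx j
  -- c' * (pd i b_i) = pd i (curl component)
  have key : ∀ (i : Fin 3) (g : (Fin 3 → ℝ) → ℝ),
      (∀ y ∈ U, g y = c' * b y i) → pd i g x = c' * pd i (fun y => b y i) x := by
    intro i g hg
    have heq : g =ᶠ[nhds x] fun y => c' * b y i := by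
      filter_upwards [hU.mem_nhds hx] with y hy using hg y hy
    have h1 : fderiv ℝ g x = fderiv ℝ (fun y => c' * b y i) x := heq.fderiv_eq
    have h2 : fderiv ℝ (fun y => c' * b y i) x = c' • fderiv ℝ (fun y => b y i) x :=
      fderiv_const_mul (hbd i i) c'
    simp only [pd, h1, h2, ContinuousLinearMap.smul_apply, smul_eq_mul]
  have h0 : pd 0 (fun y => pd 1 (fun z => a z 2) y - pd 2 (fun z => a z 1) y) x
      = c' * pd 0 (fun y => b y 0) x := key 0 _ (fun y hy => (hcurl y hy).1)
  have h1 : pd 1 (fun y => pd 2 (fun z => a z 0) y - pd 0 (fun z => a z 2) y) x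
      = c' * pd 1 (fun y => b y 1) x := key 1 _ (fun y hy => (hcurl y hy).2.1)
  have h2 : pd 2 (fun y => pd 0 (fun z => a z 1) y - pd 1 (fun z => a z 0) y) x
      = c' * pd 2 (fun y => b y 2) x := key 2 _ (fun y hy => (hcurl y hy).2.2)
  -- expand pd of differences
  have hsub : ∀ (i : Fin 3) (g h : (Fin 3 → ℝ) → ℝ), DifferentiableAt ℝ g x →
      DifferentiableAt ℝ h x → pd i (fun y => g y - h y) x = pd i g x - pd i h x := by
    intro i g h hg hh
    simp only [pd, fderiv_fun_sub hg hh, ContinuousLinearMap.sub_apply]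
  rw [hsub 0 _ _ (had 2 1) (had 1 2)] at h0
  rw [hsub 1 _ _ (had 0 2) (had 2 0)] at h1
  rw [hsub 2 _ _ (had 1 0) (had 0 1)] at h2
  have s0 := pd_symm hU (ha 2) hx 0 1
  have s1 := pd_symm hU (ha 1) hx 2 0
  have s2 := pd_symm hU (ha 0) hx 1 2
  have hdivx := hdiv x hx
  rw [Fin.sum_univ_three] at hdivx
  have hzero : c' * (c'' * ∑ i, a x i * b x i) = 0 := by
    rw [← hdivx]
    nlinarith [h0, h1, h2, s0, s1, s2]
  rcases mul_eq_zero.1 hzero with h | h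
  · simp [h]
  · rcases mul_eq_zero.1 h with h | h
    · simp [h]
    · exact absurd h (hab x hx)
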